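/- If an ensemble A = Σᵢ uᵢ·aᵢ (a finite formal linear combination over ℂ of continuous maps aᵢ : X → Y) satisfies A|_T = 0 for every subset T ⊆ X with at most r points (i.e., for every such T, Σ_{i : aᵢ|_T = ψ} uᵢ = 0 for each function ψ : T → Y), then the induced linear map A^{(r)} : C(Y)^{⊗r} → C(X)^{⊗r}, defined on pure tensors by f₁⊗⋯⊗f_r ↦ Σᵢ uᵢ (f₁∘aᵢ)⊗⋯⊗(f_r∘aᵢ), is the zero map. -/

import Mathlib

open scoped Classical

open scoped TensorProduct

/-- Evaluation at a point as a linear map on `C(X, ℂ)`. -/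
private noncomputable def evalCLM (X : Type) [TopologicalSpace X] (x : X) : C(X, ℂ) →ₗ[ℂ] ℂ where
  toFun g := g x
  map_add' _ _ := rfl
  map_smul' _ _ := rfl

/-- Any finite-dimensional subspace of `C(X, ℂ)` admits a finite separating set of points. -/
private lemma exists_sep_aux (X : Type) [TopologicalSpace X] :
    ∀ (n : ℕ) (U : Submodule ℂ C(X, ℂ)), FiniteDimensional ℂ U →
      Module.finrank ℂ U ≤ n →
      ∃ S : Finset X, ∀ v ∈ U, (∀ x ∈ S, v x = 0) → v = 0 := by
  intro n
  induction n with
  | zero =>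
    intro U hU hrank
    have hbot : U = ⊥ := by
      have := Submodule.finrank_eq_zero (R := ℂ) (S := U)
      exact this.1 (Nat.le_zero.mp hrank)
    exact ⟨∅, fun v hv _ => by simpa [hbot] using hv⟩
  | succ n ih =>
    intro U hU hrank
    by_cases hbot : U = ⊥
    · exact ⟨∅, fun v hv _ => by simpa [hbot] using hv⟩
    · obtain ⟨v, hvU, hvne⟩ := Submodule.exists_mem_ne_zero_of_ne_bot hbot
      have hvx : ∃ x : X, v x ≠ 0 := by
        by_contra h
        push_neg at h
        exact hvne (ContinuousMap.ext fun x => h x)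
      obtain ⟨x, hx⟩ := hvx
      set U' : Submodule ℂ C(X, ℂ) := U ⊓ LinearMap.ker (evalCLM X x) with hU'
      have hle : U' ≤ U := inf_le_left
      have hvnot : v ∉ U' := by
        intro hmem
        exact hx (by simpa [evalCLM] using hmem.2)
      have hlt : U' < U := lt_of_le_of_ne hle (fun h => hvnot (h ▸ hvU))
      have hU'fd : FiniteDimensional ℂ U' := Submodule.finiteDimensional_of_le hle
      have hrank' : Module.finrank ℂ U' ≤ n := by
        have := Submodule.finrank_lt_finrank_of_lt (K := ℂ) hlt
        omega
      obtain ⟨S', hS'⟩ := ih U' hU'fd hrank'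
      refine ⟨insert x S', fun w hwU hw => ?_⟩
      have hwx : w x = 0 := hw x (Finset.mem_insert_self x S')
      have hwU' : w ∈ U' := ⟨hwU, by simpa [evalCLM] using hwx⟩
      exact hS' w hwU' (fun y hy => hw y (Finset.mem_insert_of_mem hy))

set_option synthInstance.maxHeartbeats 1000000 in
set_option maxHeartbeats 2000000 in
/-- If an ensemble `A = Σᵢ uᵢ·aᵢ` of continuous maps `X → Y` restricts to `0`
on every subset `T ⊆ X` with at most `r` points, then the induced map
`A^{(r)} : C(Y)^{⊗r} → C(X)^{⊗r}` is zero. -/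
theorem ensemble_restriction_zero_implies_coherent
    (X Y : Type) [TopologicalSpace X] [TopologicalSpace Y]
    (r : ℕ) (ι : Type) [Fintype ι] (u : ι → ℂ) (a : ι → C(X, Y))
    (hrestr : ∀ T : Set X, T.Finite → T.ncard ≤ r → ∀ ψ : T → Y,
      (∑ i ∈ Finset.univ.filter (fun i => ∀ t : T, a i t = ψ t), u i) = 0) :
    ∀ f : Fin r → C(Y, ℂ),
      (∑ i, u i • PiTensorProduct.tprod ℂ (fun j => (f j).comp (a i))) =
        (0 : ⨂[ℂ] _ : Fin r, C(X, ℂ)) := by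
  intro f
  -- the key pointwise vanishing lemma
  have point : ∀ x : Fin r → X, (∑ i, u i * ∏ j, (f j) (a i (x j))) = 0 := by
    intro x
    set T : Set X := Set.range x with hT
    have hTfin : T.Finite := Set.finite_range x
    have hTcard : T.ncard ≤ r := by
      have : T = ↑(Finset.univ.image x) := by
        ext y; simp [hT]
      rw [this, Set.ncard_coe_finset]
      calc (Finset.univ.image x).card ≤ Finset.univ.card := Finset.card_image_le
        _ = r := by simp
    set G : ι → (T → Y) := fun i => fun t => a i t with hG
    have := Finset.sum_fiberwise_of_maps_to
      (s := (Finset.univ : Finset ι)) (g := G) (t := Finset.univ.image G)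
      (fun i _ => Finset.mem_image_of_mem G (Finset.mem_univ i))
      (fun i => u i * ∏ j, (f j) (a i (x j)))
    rw [← this]
    refine Finset.sum_eq_zero fun ψ _ => ?_
    have hmem : ∀ j, x j ∈ T := fun j => ⟨j, rfl⟩
    have hval : ∀ i ∈ Finset.univ.filter (fun i => G i = ψ),
        u i * ∏ j, (f j) (a i (x j)) = u i * ∏ j, (f j) (ψ ⟨x j, hmem j⟩) := by
      intro i hi
      rw [Finset.mem_filter] at hi
      congr 1
      refine Finset.prod_congr rfl fun j _ => ?_
      have : a i (x j) = G i ⟨x j, hmem j⟩ := rfl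
      rw [this, hi.2]
    rw [Finset.sum_congr rfl hval, ← Finset.sum_mul]
    have hfilter : Finset.univ.filter (fun i => G i = ψ) =
        Finset.univ.filter (fun i => ∀ t : T, a i t = ψ t) := by
      refine Finset.filter_congr fun i _ => ?_
      constructor
      · intro h t; rw [← h]
      · intro h; funext t; exact h t
    rw [hfilter]
    refine mul_eq_zero_of_left ?_ _
    convert hrestr T hTfin hTcard ψ using 2
    congr
  -- set up the finite-dimensional subspace spanned by the functions f j ∘ a i
  set g : ι → Fin r → C(X, ℂ) := fun i j => (f j).comp (a i) with hg
  set V : Submodule ℂ C(X, ℂ) :=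
    Submodule.span ℂ (Set.range fun p : ι × Fin r => g p.1 p.2) with hV
  have hVfd : FiniteDimensional ℂ V :=
    FiniteDimensional.span_of_finite ℂ (Set.finite_range _)
  obtain ⟨S, hS⟩ := exists_sep_aux X (Module.finrank ℂ V) V hVfd le_rfl
  -- the restriction map to S
  set ρ : C(X, ℂ) →ₗ[ℂ] ({x // x ∈ S} → ℂ) :=
    { toFun := fun h => fun s => h s.1
      map_add' := fun _ _ => rfl
      map_smul' := fun _ _ => rfl } with hρ
  set ψm : V →ₗ[ℂ] ({x // x ∈ S} → ℂ) := ρ ∘ₗ V.subtype with hψm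
  have hψinj : Function.Injective ψm := by
    intro v w hvw
    have h1 : ∀ x ∈ S, (v : C(X, ℂ)) x = (w : C(X, ℂ)) x := by
      intro x hx
      have := congrFun hvw ⟨x, hx⟩
      simpa [hψm, hρ] using this
    have h2 : (v : C(X, ℂ)) - (w : C(X, ℂ)) = 0 := by
      refine hS _ (Submodule.sub_mem V v.2 w.2) fun x hx => ?_
      simp [h1 x hx]
    exact Subtype.ext (sub_eq_zero.mp h2)
  obtain ⟨lam, hlam⟩ := @LinearMap.exists_leftInverse_of_injective ℂ V ({x // x ∈ S} → ℂ) _ _ _ _ _ ψm (LinearMap.ker_eq_bot_of_injective hψinj)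
  -- the lifted elements in V
  set g' : ι → Fin r → V := fun i j => ⟨g i j, Submodule.subset_span ⟨(i, j), rfl⟩⟩ with hg'
  set t' : ⨂[ℂ] _ : Fin r, V := ∑ i, u i • PiTensorProduct.tprod ℂ (g' i) with ht'
  -- key computation: the image of t' under ⨂ ψm is zero
  have key : (∑ i, u i • PiTensorProduct.tprod ℂ (fun j => ψm (g' i j))) =
      (0 : ⨂[ℂ] _ : Fin r, ({x // x ∈ S} → ℂ)) := by
    have expand : ∀ i, PiTensorProduct.tprod ℂ (fun j => ψm (g' i j)) =
        ∑ x : Fin r → {x // x ∈ S}, (∏ j, g i j (x j)) •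
          PiTensorProduct.tprod ℂ (fun j => (Pi.single (x j) 1 : {x // x ∈ S} → ℂ)) := by
      intro i
      have hsingle : ∀ j, ψm (g' i j) =
          ∑ s : {x // x ∈ S}, g i j s.1 • (Pi.single s 1 : {x // x ∈ S} → ℂ) := by
        intro j
        funext s
        simp [hψm, hρ, hg', Pi.single_apply, Finset.sum_apply]
      calc PiTensorProduct.tprod ℂ (fun j => ψm (g' i j))
          = PiTensorProduct.tprod ℂ (fun j =>
              ∑ s : {x // x ∈ S}, g i j s.1 • (Pi.single s 1 : {x // x ∈ S} → ℂ)) := by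
            congr 1; funext j; exact hsingle j
        _ = ∑ x : Fin r → {x // x ∈ S}, PiTensorProduct.tprod ℂ
              (fun j => g i j (x j).1 • (Pi.single (x j) 1 : {x // x ∈ S} → ℂ)) :=
            MultilinearMap.map_sum _
              (g := fun j s => g i j s.1 • (Pi.single s 1 : {x // x ∈ S} → ℂ))
        _ = ∑ x : Fin r → {x // x ∈ S}, (∏ j, g i j (x j)) •
              PiTensorProduct.tprod ℂ (fun j => (Pi.single (x j) 1 : {x // x ∈ S} → ℂ)) := by
            refine Finset.sum_congr rfl fun x _ => ?_
            exact MultilinearMap.map_smul_univ _ _ _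
    calc (∑ i, u i • PiTensorProduct.tprod ℂ (fun j => ψm (g' i j)))
        = ∑ i, ∑ x : Fin r → {x // x ∈ S}, (u i * ∏ j, g i j (x j)) •
            PiTensorProduct.tprod ℂ (fun j => (Pi.single (x j) 1 : {x // x ∈ S} → ℂ)) := by
          refine Finset.sum_congr rfl fun i _ => ?_
          rw [expand i, Finset.smul_sum]
          exact Finset.sum_congr rfl fun x _ => by rw [smul_smul]
      _ = ∑ x : Fin r → {x // x ∈ S}, (∑ i, u i * ∏ j, g i j (x j)) •
            PiTensorProduct.tprod ℂ (fun j => (Pi.single (x j) 1 : {x // x ∈ S} → ℂ)) := by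
          rw [Finset.sum_comm]
          exact Finset.sum_congr rfl fun x _ => (Finset.sum_smul).symm
      _ = 0 := by
          refine Finset.sum_eq_zero fun x _ => ?_
          have : (∑ i, u i * ∏ j, g i j (x j)) = 0 := point (fun j => (x j).1)
          rw [this, zero_smul]
  -- deduce t' = 0 via the left inverse
  have ht'zero : t' = 0 := by
    have h1 : t' = PiTensorProduct.map (fun _ : Fin r => lam)
        (∑ i, u i • PiTensorProduct.tprod ℂ (fun j => ψm (g' i j))) := by
      rw [map_sum]
      refine Finset.sum_congr rfl fun i _ => ?_
      rw [LinearMap.map_smul, PiTensorProduct.map_tprod]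
      have : (fun j => lam (ψm (g' i j))) = g' i :=
        funext fun j => by simpa using LinearMap.congr_fun hlam (g' i j)
      rw [this]
    rw [h1, key, map_zero]
  -- push down to C(X, ℂ)
  have h2 : (∑ i, u i • PiTensorProduct.tprod ℂ (fun j => (f j).comp (a i))) =
      PiTensorProduct.map (fun _ : Fin r => V.subtype) t' := by
    rw [ht', map_sum]
    refine Finset.sum_congr rfl fun i _ => ?_
    rw [LinearMap.map_smul, PiTensorProduct.map_tprod]
    rfl
  rw [h2, ht'zero, map_zero]
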